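/- Let f : ℂ → ℂ be an entire function with Taylor coefficients c_n, let m > 1, and suppose there is a constant C > 0 such that log M_f(r) ≤ C·(log r)^m for all r ≥ 1. Then there exists a constant C' > 0 (depending only on C and m) such that |c_n| ≤ exp(−C'·n^{m/(m−1)}) for all n ≥ 1; one may take C' = (m−1)·m^{−m/(m−1)}·C^{−1/(m−1)}. -/

import Mathlib

open Complex Metric

private theorem entire_of_hasSum (f : ℂ → ℂ) (c : ℕ → ℂ)
    (hf : ∀ z : ℂ, HasSum (fun n : ℕ => c n * z ^ n) (f z)) : Differentiable ℂ f := by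
  set p : FormalMultilinearSeries ℂ ℂ ℂ :=
    fun k => ContinuousMultilinearMap.mkPiRing ℂ (Fin k) (c k) with hp
  have hnorm : ∀ k, ‖p k‖ = ‖c k‖ := by
    intro k
    rw [hp]
    rw [ContinuousMultilinearMap.norm_mkPiRing]
  have hsum : ∀ r : NNReal, Summable (fun k : ℕ => ‖p k‖ * (r : ℝ) ^ k) := by
    intro r
    have h1 : Summable (fun k : ℕ => ‖c k * (r : ℂ) ^ k‖) :=
      summable_norm_iff.2 (hf r).summable
    refine h1.congr fun k => ?_
    simp [hnorm, norm_mul, norm_pow, map_mul, map_pow,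
      _root_.abs_of_nonneg r.coe_nonneg, mul_comm]
  have hrad : p.radius = ⊤ := p.radius_eq_top_of_summable_norm hsum
  have hpb : HasFPowerSeriesOnBall f p 0 ⊤ := by
    refine ⟨hrad.ge, ENNReal.zero_lt_top, fun {y} _ => ?_⟩
    rw [zero_add]
    convert hf y using 2 with k
    case e'_3 => rfl
    simp [hp, ContinuousMultilinearMap.mkPiRing_apply, smul_eq_mul, mul_comm]
  intro z
  exact (hpb.analyticAt_of_mem (by simp)).differentiableAt

private theorem cauchy_est (f : ℂ → ℂ) (c : ℕ → ℂ)
    (hf : ∀ z : ℂ, HasSum (fun n : ℕ => c n * z ^ n) (f z))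
    (R : ℝ) (hR : 0 < R) (M : ℝ) (hM : ∀ z : ℂ, ‖z‖ = R → ‖f z‖ ≤ M)
    (n : ℕ) : ‖c n‖ ≤ M / R ^ n := by
  set p : FormalMultilinearSeries ℂ ℂ ℂ :=
    fun k => ContinuousMultilinearMap.mkPiRing ℂ (Fin k) (c k) with hp
  have hnorm : ∀ k, ‖p k‖ = ‖c k‖ := by
    intro k
    rw [hp]
    rw [ContinuousMultilinearMap.norm_mkPiRing]
  have hsum : ∀ r : NNReal, Summable (fun k : ℕ => ‖p k‖ * (r : ℝ) ^ k) := by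
    intro r
    have h1 : Summable (fun k : ℕ => ‖c k * (r : ℂ) ^ k‖) :=
      summable_norm_iff.2 (hf r).summable
    refine h1.congr fun k => ?_
    simp [hnorm, norm_mul, norm_pow, map_mul, map_pow,
      _root_.abs_of_nonneg r.coe_nonneg, mul_comm]
  have hrad : p.radius = ⊤ := p.radius_eq_top_of_summable_norm hsum
  have hpb : HasFPowerSeriesOnBall f p 0 ⊤ := by
    refine ⟨hrad.ge, ENNReal.zero_lt_top, fun {y} _ => ?_⟩
    rw [zero_add]
    convert hf y using 2 with k
    case e'_3 => rfl
    simp [hp, ContinuousMultilinearMap.mkPiRing_apply, smul_eq_mul, mul_comm]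
  have hdiff : Differentiable ℂ f := by
    intro z
    exact (hpb.analyticAt_of_mem (by simp)).differentiableAt
  set R' : NNReal := ⟨R, hR.le⟩ with hR'
  have hRpos : (0 : NNReal) < R' := by exact_mod_cast hR
  have hcb : HasFPowerSeriesOnBall f (cauchyPowerSeries f 0 R') 0 ⊤ :=
    hdiff.hasFPowerSeriesOnBall 0 hRpos
  have hpeq : p = cauchyPowerSeries f 0 R' :=
    hpb.hasFPowerSeriesAt.eq_formalMultilinearSeries hcb.hasFPowerSeriesAt
  have hest := norm_cauchyPowerSeries_le f 0 R' n
  rw [← hpeq, hnorm] at hest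
  have hMnn : 0 ≤ M := le_trans (norm_nonneg _)
    (hM (R : ℂ) (by simp [_root_.abs_of_nonneg hR.le]))
  have hint : (∫ θ : ℝ in (0:ℝ)..2 * Real.pi, ‖f (circleMap 0 R' θ)‖) ≤ 2 * Real.pi * M := by
    have : ∀ θ ∈ Set.Icc (0:ℝ) (2 * Real.pi), ‖f (circleMap 0 R' θ)‖ ≤ M := by
      intro θ _
      exact hM _ (by rw [norm_circleMap_zero]; exact _root_.abs_of_nonneg hR.le)
    calc (∫ θ : ℝ in (0:ℝ)..2 * Real.pi, ‖f (circleMap 0 R' θ)‖)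
        ≤ ∫ _ : ℝ in (0:ℝ)..2 * Real.pi, M := by
          apply intervalIntegral.integral_mono_on Real.two_pi_pos.le
          · exact ((hdiff.continuous.comp (continuous_circleMap 0 R')).norm).intervalIntegrable _ _
          · exact intervalIntegrable_const
          · exact this
      _ = 2 * Real.pi * M := by simp [mul_comm]
  have habs : |(R' : ℝ)| = R := _root_.abs_of_nonneg hR.le
  calc ‖c n‖
      ≤ ((2 * Real.pi)⁻¹ * ∫ θ : ℝ in (0:ℝ)..2 * Real.pi, ‖f (circleMap 0 R' θ)‖) * |(R' : ℝ)|⁻¹ ^ n := hest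
    _ ≤ ((2 * Real.pi)⁻¹ * (2 * Real.pi * M)) * |(R' : ℝ)|⁻¹ ^ n := by
        apply mul_le_mul_of_nonneg_right
        · exact mul_le_mul_of_nonneg_left hint (by positivity)
        · positivity
    _ = M / R ^ n := by
        rw [habs]
        field_simp
        rw [one_div, inv_pow, inv_mul_cancel_right₀ (by positivity)]

/-- Example 3.1, forward direction: if `f` is entire, `m > 1`, and
`log M_f(r) ≤ C·(log r)^m` for all `r ≥ 1`, then
`|c_n| ≤ exp(-C'·n^{m/(m-1)})` for all `n ≥ 1`, with the explicit constant
`C' = (m-1)·m^{-m/(m-1)}·C^{-1/(m-1)} > 0`. -/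
theorem coefficient_decay_from_logpower_growth
    (f : ℂ → ℂ) (c : ℕ → ℂ)
    (hf : ∀ z : ℂ, HasSum (fun n : ℕ => c n * z ^ n) (f z))
    (C m : ℝ) (hC : 0 < C) (hm : 1 < m)
    (hgrow : ∀ r : ℝ, 1 ≤ r →
      Real.log (sSup {x : ℝ | ∃ z : ℂ, ‖z‖ = r ∧ x = ‖f z‖})
        ≤ C * Real.log r ^ m) :
    ∀ n : ℕ, 1 ≤ n →
      ‖c n‖
        ≤ Real.exp (-((m - 1) * m ^ (-(m / (m - 1))) * C ^ (-(1 / (m - 1))) *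
            (n : ℝ) ^ (m / (m - 1)))) := by
  intro n hn
  have hm1 : (0:ℝ) < m - 1 := by linarith
  have hm0 : (0:ℝ) < m := by linarith
  have hn0 : (0:ℝ) < (n : ℝ) := by exact_mod_cast hn
  set s : ℝ := 1 / (m - 1) with hs
  have hq : m / (m - 1) = 1 + s := by rw [hs]; field_simp; ring
  set x : ℝ := (n : ℝ) / (m * C) with hx
  have hx0 : 0 < x := by positivity
  set a : ℝ := x ^ s with ha
  have ha0 : 0 < a := Real.rpow_pos_of_pos hx0 s
  have ham : a ^ m = x * a := by
    rw [ha, ← Real.rpow_mul hx0.le]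
    have hsm : s * m = 1 + s := by rw [hs]; field_simp; ring
    rw [hsm, Real.rpow_add hx0, Real.rpow_one]
  have hCa : C * a ^ m = (n:ℝ) * a / m := by
    rw [ham, hx]; field_simp
  have hxa : a = (n:ℝ) ^ s * (m ^ s)⁻¹ * (C ^ s)⁻¹ := by
    rw [ha, hx, Real.div_rpow hn0.le (by positivity), Real.mul_rpow hm0.le hC.le]
    ring
  have hms : (0:ℝ) < m ^ s := Real.rpow_pos_of_pos hm0 s
  have hCs : (0:ℝ) < C ^ s := Real.rpow_pos_of_pos hC s
  have key : C * a ^ m - (n:ℝ) * a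
      = -((m - 1) * m ^ (-(m / (m - 1))) * C ^ (-(1 / (m - 1))) * (n : ℝ) ^ (m / (m - 1))) := by
    rw [hCa, hq, ← hs, Real.rpow_neg hC.le, Real.rpow_neg hm0.le,
        Real.rpow_add hn0, Real.rpow_one, Real.rpow_add hm0, Real.rpow_one, hxa]
    field_simp
    ring
  -- the sup bound
  set r : ℝ := Real.exp a with hr
  have hr1 : (1:ℝ) ≤ r := Real.one_le_exp ha0.le
  have hr0 : (0:ℝ) < r := lt_of_lt_of_le one_pos hr1
  set S := {y : ℝ | ∃ z : ℂ, ‖z‖ = r ∧ y = ‖f z‖} with hS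
  have hdiff : Differentiable ℂ f := entire_of_hasSum f c hf
  have hSim : S = (fun z => ‖f z‖) '' (Metric.sphere (0:ℂ) r) := by
    ext y
    simp only [hS, Set.mem_setOf_eq, Set.mem_image, mem_sphere_iff_norm, sub_zero]
    constructor
    · rintro ⟨z, h1, h2⟩; exact ⟨z, h1, h2.symm⟩
    · rintro ⟨z, h1, h2⟩; exact ⟨z, h1, h2.symm⟩
  have hBdd : BddAbove S := by
    rw [hSim]
    exact ((isCompact_sphere (0:ℂ) r).image
      (continuous_norm.comp hdiff.continuous)).bddAbove
  have hM : ∀ z : ℂ, ‖z‖ = r → ‖f z‖ ≤ sSup S :=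
    fun z hz => le_csSup hBdd ⟨z, hz, rfl⟩
  have hest := cauchy_est f c hf r hr0 (sSup S) hM n
  rcases le_or_gt (sSup S) 0 with hM0 | hM0
  · have hrpn : (0:ℝ) < r ^ n := by positivity
    have : sSup S / r ^ n ≤ 0 := div_nonpos_of_nonpos_of_nonneg hM0 hrpn.le
    exact hest.trans (this.trans (Real.exp_pos _).le)
  · have hlog := hgrow r hr1
    have hMe : sSup S ≤ Real.exp (C * Real.log r ^ m) := by
      calc sSup S = Real.exp (Real.log (sSup S)) := (Real.exp_log hM0).symm
        _ ≤ _ := Real.exp_le_exp.2 hlog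
    have hlr : Real.log r = a := Real.log_exp a
    have hrn : r ^ n = Real.exp ((n:ℝ) * a) := by
      rw [hr, ← Real.exp_nat_mul]
    calc ‖c n‖ ≤ sSup S / r ^ n := hest
      _ ≤ Real.exp (C * a ^ m) / r ^ n := by
          gcongr
          rw [hlr] at hMe; exact hMe
      _ = Real.exp (C * a ^ m) / Real.exp ((n:ℝ) * a) := by rw [hrn]
      _ = Real.exp (C * a ^ m - (n:ℝ) * a) := (Real.exp_sub _ _).symm
      _ = _ := by rw [key]
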